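/- Let P be an n×n partial Latin square that has r completely filled columns, one further column containing exactly s nonempty cells, and no other nonempty cells. If n ≥ 2r + s, then P is completable. -/

import Mathlib

open Finset

def IsPartialLatinSquare {n : ℕ} (P : Fin n → Fin n → Option (Fin n)) : Prop :=
  (∀ (i j j' : Fin n) (s : Fin n), P i j = some s → P i j' = some s → j = j') ∧
  (∀ (i i' j : Fin n) (s : Fin n), P i j = some s → P i' j = some s → i = i')

def IsLatinSquare {n : ℕ} (L : Fin n → Fin n → Fin n) : Prop :=
  (∀ i : Fin n, Function.Injective (L i)) ∧
  (∀ j : Fin n, Function.Injective fun i => L i j)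

def Completable {n : ℕ} (P : Fin n → Fin n → Option (Fin n)) : Prop :=
  ∃ L : Fin n → Fin n → Fin n, IsLatinSquare L ∧ ∀ i j s, P i j = some s → L i j = s


def getcell {α : Type*} (o : Option α) (h : o ≠ none) : α :=
  o.get (Option.ne_none_iff_isSome.mp h)

lemma getcell_eq {α : Type*} {o : Option α} {x : α} (h : o ≠ none) (he : o = some x) :
    getcell o h = x := by subst he; rfl

lemma some_getcell {α : Type*} (o : Option α) (h : o ≠ none) : o = some (getcell o h) := by
  cases o with
  | none => exact absurd rfl h
  | some a => rfl

/-- row symbol count -/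
lemma rowS_card {n : ℕ} (P : Fin n → Fin n → Option (Fin n)) (hP : IsPartialLatinSquare P)
    (D : Finset (Fin n)) (hfull : ∀ j ∈ D, ∀ i, P i j ≠ none)
    (hemp : ∀ j, j ∉ D → ∀ i, P i j = none) (i : Fin n) :
    (univ.filter (fun x => ∃ j, P i j = some x)).card = D.card := by
  symm
  apply Finset.card_bij (fun j hj => getcell (P i j) (hfull j hj i))
  · intro j hj
    simp only [mem_filter, mem_univ, true_and]
    exact ⟨j, some_getcell _ _⟩
  · intro j hj j' hj' heq
    change getcell (P i j) _ = getcell (P i j') _ at heq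
    have hx : P i j = some (getcell (P i j) (hfull j hj i)) := some_getcell _ _
    have hx' : P i j' = some (getcell (P i j') (hfull j' hj' i)) := some_getcell _ _
    rw [← heq] at hx'
    exact hP.1 i j j' _ hx hx'
  · intro x hx
    simp only [mem_filter, mem_univ, true_and] at hx
    obtain ⟨j, hj⟩ := hx
    have hjD : j ∈ D := by
      by_contra h
      rw [hemp j h i] at hj; exact nomatch hj
    exact ⟨j, hjD, getcell_eq _ hj⟩

/-- each symbol occurs in exactly `D.card` rows -/
lemma colOcc_card {n : ℕ} (P : Fin n → Fin n → Option (Fin n)) (hP : IsPartialLatinSquare P)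
    (D : Finset (Fin n)) (hfull : ∀ j ∈ D, ∀ i, P i j ≠ none)
    (hemp : ∀ j, j ∉ D → ∀ i, P i j = none) (x : Fin n) :
    (univ.filter (fun i => ∃ j, P i j = some x)).card = D.card := by
  have hex : ∀ j ∈ D, ∃ i, P i j = some x := by
    intro j hj
    have hinj : Function.Injective (fun i => getcell (P i j) (hfull j hj i)) := by
      intro i i' he
      change getcell (P i j) _ = getcell (P i' j) _ at he
      have ha : P i j = some (getcell (P i j) (hfull j hj i)) := some_getcell _ _
      have ha' : P i' j = some (getcell (P i' j) (hfull j hj i')) := some_getcell _ _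
      rw [← he] at ha'
      exact hP.2 i i' j _ ha ha'
    have hsurj := (Finite.injective_iff_surjective).mp hinj
    obtain ⟨i, hi⟩ := hsurj x
    refine ⟨i, ?_⟩
    change getcell (P i j) _ = x at hi
    rw [some_getcell (P i j) (hfull j hj i), hi]
  symm
  apply Finset.card_bij (fun j hj => (hex j hj).choose)
  · intro j hj
    simp only [mem_filter, mem_univ, true_and]
    exact ⟨j, (hex j hj).choose_spec⟩
  · intro j hj j' hj' heq
    have h1 := (hex j hj).choose_spec
    have h2 := (hex j' hj').choose_spec
    rw [heq] at h1
    exact hP.1 _ j j' x h1 h2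
  · intro i hi
    simp only [mem_filter, mem_univ, true_and] at hi
    obtain ⟨j, hj⟩ := hi
    have hjD : j ∈ D := by
      by_contra h
      rw [hemp j h i] at hj; exact nomatch hj
    refine ⟨j, hjD, ?_⟩
    exact hP.2 _ i j x (hex j hjD).choose_spec hj

/-- completing a set of full columns (rest empty) -/
lemma complete_of_full {n : ℕ} :
    ∀ (m : ℕ) (D : Finset (Fin n)) (P : Fin n → Fin n → Option (Fin n)),
    n = D.card + m → IsPartialLatinSquare P →
    (∀ j ∈ D, ∀ i, P i j ≠ none) → (∀ j, j ∉ D → ∀ i, P i j = none) →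
    Completable P := by
  intro m
  induction m with
  | zero =>
    intro D P hcard hP hfull _
    have hD : D = univ := by
      apply Finset.eq_univ_of_card
      simp [Fintype.card_fin]; omega
    have hf : ∀ i j, P i j ≠ none := fun i j => hfull j (hD ▸ mem_univ j) i
    refine ⟨fun i j => getcell (P i j) (hf i j), ⟨?_, ?_⟩, ?_⟩
    · intro i j j' he
      change getcell (P i j) _ = getcell (P i j') _ at he
      have ha : P i j = some (getcell (P i j) (hf i j)) := some_getcell _ _
      have ha' : P i j' = some (getcell (P i j') (hf i j')) := some_getcell _ _
      rw [← he] at ha'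
      exact hP.1 i j j' _ ha ha'
    · intro j i i' he
      change getcell (P i j) _ = getcell (P i' j) _ at he
      have ha : P i j = some (getcell (P i j) (hf i j)) := some_getcell _ _
      have ha' : P i' j = some (getcell (P i' j) (hf i' j)) := some_getcell _ _
      rw [← he] at ha'
      exact hP.2 i i' j _ ha ha'
    · intro i j x hx
      exact getcell_eq _ hx
  | succ m ih =>
    intro D P hcard hP hfull hemp
    -- pick an empty column j0
    have hne : ∃ j, j ∉ D := by
      by_contra h
      push_neg at h
      have : D = univ := eq_univ_iff_forall.mpr h
      rw [this, card_univ, Fintype.card_fin] at hcard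
      omega
    obtain ⟨j0, hj0⟩ := hne
    -- Hall system
    set t : Fin n → Finset (Fin n) := fun i => univ.filter (fun x => ∀ j, P i j ≠ some x) with ht
    have htcard : ∀ i, (t i).card = m + 1 := by
      intro i
      have h1 := Finset.card_filter_add_card_filter_not
        (s := (univ : Finset (Fin n))) (p := fun x => ∃ j, P i j = some x)
      rw [rowS_card P hP D hfull hemp i, card_univ, Fintype.card_fin] at h1
      have h2 : (univ.filter (fun x => ¬ ∃ j, P i j = some x)) = t i := by
        apply filter_congr
        intro x _
        push_neg
        rfl
      rw [h2] at h1
      omega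
    have hucard : ∀ x, (univ.filter (fun i => ∀ j, P i j ≠ some x)).card = m + 1 := by
      intro x
      have h1 := Finset.card_filter_add_card_filter_not
        (s := (univ : Finset (Fin n))) (p := fun i => ∃ j, P i j = some x)
      rw [colOcc_card P hP D hfull hemp x, card_univ, Fintype.card_fin] at h1
      have h2 : (univ.filter (fun i => ¬ ∃ j, P i j = some x))
          = univ.filter (fun i => ∀ j, P i j ≠ some x) := by
        apply filter_congr
        intro i _
        push_neg
        rfl
      rw [h2] at h1
      omega
    have hall : ∀ s : Finset (Fin n), s.card ≤ (s.biUnion t).card := by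
      intro s
      have swap : ∑ i ∈ s, (t i).card
          = ∑ x ∈ (univ : Finset (Fin n)), (s.filter (fun i => x ∈ t i)).card := by
        have e1 : ∀ i, (t i).card = ∑ x ∈ (univ : Finset (Fin n)), if x ∈ t i then 1 else 0 := by
          intro i
          rw [← Finset.card_filter, Finset.filter_univ_mem]
        calc ∑ i ∈ s, (t i).card
            = ∑ i ∈ s, ∑ x ∈ (univ : Finset (Fin n)), if x ∈ t i then 1 else 0 := by
              exact Finset.sum_congr rfl (fun i _ => e1 i)
          _ = ∑ x ∈ (univ : Finset (Fin n)), ∑ i ∈ s, if x ∈ t i then 1 else 0 :=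
              Finset.sum_comm
          _ = ∑ x ∈ (univ : Finset (Fin n)), (s.filter (fun i => x ∈ t i)).card := by
              exact Finset.sum_congr rfl (fun x _ => (Finset.card_filter _ _).symm)
      have key : ∑ x ∈ (univ : Finset (Fin n)), (s.filter (fun i => x ∈ t i)).card
          ≤ (s.biUnion t).card * (m + 1) := by
        calc ∑ x ∈ (univ : Finset (Fin n)), (s.filter (fun i => x ∈ t i)).card
            ≤ ∑ x ∈ (univ : Finset (Fin n)),
                (if x ∈ s.biUnion t then m + 1 else 0) := by
              apply Finset.sum_le_sum
              intro x _
              by_cases hx : x ∈ s.biUnion t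
              · simp only [hx, if_true]
                rw [← hucard x]
                apply Finset.card_le_card
                intro i hi
                simp only [mem_filter] at hi ⊢
                refine ⟨mem_univ i, ?_⟩
                have := hi.2
                simp only [ht, mem_filter, mem_univ, true_and] at this
                exact this
              · simp only [hx, if_false]
                have : s.filter (fun i => x ∈ t i) = ∅ := by
                  apply Finset.filter_eq_empty_iff.mpr
                  intro i hi hx'
                  exact hx (Finset.mem_biUnion.mpr ⟨i, hi, hx'⟩)
                rw [this]; simp
          _ = ∑ x ∈ s.biUnion t, (m + 1) := by
              rw [Finset.sum_ite_mem]
              congr 1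
              exact Finset.univ_inter _
          _ = (s.biUnion t).card * (m + 1) := by rw [Finset.sum_const, smul_eq_mul]
      have lhs : ∑ i ∈ s, (t i).card = s.card * (m + 1) := by
        rw [Finset.sum_congr rfl (fun i _ => htcard i), Finset.sum_const, smul_eq_mul]
      have : s.card * (m + 1) ≤ (s.biUnion t).card * (m + 1) := by
        rw [← lhs, swap]; exact key
      exact Nat.le_of_mul_le_mul_right this (Nat.succ_pos m)
    obtain ⟨f, hfinj, hf⟩ := (Finset.all_card_le_biUnion_card_iff_exists_injective t).mp hall
    have hfval : ∀ i j, P i j ≠ some (f i) := by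
      intro i
      have := hf i
      simp only [ht, mem_filter, mem_univ, true_and] at this
      exact this
    set P' : Fin n → Fin n → Option (Fin n) :=
      fun i j => if j = j0 then some (f i) else P i j with hP'
    have hP'ls : IsPartialLatinSquare P' := by
      constructor
      · intro i j j' x h1 h2
        simp only [hP'] at h1 h2
        by_cases hj : j = j0 <;> by_cases hj' : j' = j0
        · rw [hj, hj']
        · rw [if_pos hj] at h1
          rw [if_neg hj'] at h2
          have : x = f i := by injection h1; omega
          exact absurd h2 (this ▸ hfval i j')
        · rw [if_neg hj] at h1
          rw [if_pos hj'] at h2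
          have : x = f i := by injection h2; omega
          exact absurd h1 (this ▸ hfval i j)
        · rw [if_neg hj] at h1
          rw [if_neg hj'] at h2
          exact hP.1 i j j' x h1 h2
      · intro i i' j x h1 h2
        simp only [hP'] at h1 h2
        by_cases hj : j = j0
        · rw [if_pos hj] at h1 h2
          have e1 : f i = x := by injection h1
          have e2 : f i' = x := by injection h2
          exact hfinj (e1.trans e2.symm)
        · rw [if_neg hj] at h1 h2
          exact hP.2 i i' j x h1 h2
    have hD' : n = (insert j0 D).card + m := by
      rw [Finset.card_insert_of_notMem hj0]; omega
    have hfull' : ∀ j ∈ insert j0 D, ∀ i, P' i j ≠ none := by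
      intro j hj i
      simp only [hP']
      by_cases h : j = j0
      · rw [if_pos h]; exact Option.some_ne_none _
      · rw [if_neg h]
        exact hfull j (by rcases Finset.mem_insert.mp hj with h' | h'; exact absurd h' h; exact h') i
    have hemp' : ∀ j, j ∉ insert j0 D → ∀ i, P' i j = none := by
      intro j hj i
      simp only [hP']
      rw [if_neg (fun h => hj (by rw [h]; exact Finset.mem_insert_self j0 D))]
      exact hemp j (fun h => hj (Finset.mem_insert_of_mem h)) i
    obtain ⟨L, hL, hLP'⟩ := ih (insert j0 D) P' hD' hP'ls hfull' hemp'
    refine ⟨L, hL, ?_⟩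
    intro i j x hx
    apply hLP'
    simp only [hP']
    have hj : j ≠ j0 := by
      intro h
      rw [h, hemp j0 hj0 i] at hx
      exact nomatch hx
    rw [if_neg hj]
    exact hx

theorem stmt_2 (n r s : ℕ) (P : Fin n → Fin n → Option (Fin n))
    (hP : IsPartialLatinSquare P)
    (C : Finset (Fin n)) (hCcard : C.card = r)
    (c : Fin n) (hc : c ∉ C)
    (hfullC : ∀ j ∈ C, ∀ i : Fin n, P i j ≠ none)
    (hscard : (Finset.univ.filter fun i : Fin n => P i c ≠ none).card = s)
    (hempty : ∀ j : Fin n, j ∉ C → j ≠ c → ∀ i : Fin n, P i j = none)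
    (hn : 2 * r + s ≤ n) :
    Completable P := by
  classical
  -- symbols in column c
  have hcolScard : (univ.filter (fun x => ∃ i, P i c = some x)).card = s := by
    rw [← hscard]
    symm
    apply Finset.card_bij (fun i hi => getcell (P i c) (by simpa using (mem_filter.mp hi).2))
    · intro i hi
      simp only [mem_filter, mem_univ, true_and]
      exact ⟨i, some_getcell _ _⟩
    · intro i hi i' hi' heq
      have hne : P i c ≠ none := by simpa using (mem_filter.mp hi).2
      have hne' : P i' c ≠ none := by simpa using (mem_filter.mp hi').2
      change getcell (P i c) hne = getcell (P i' c) hne' at heq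
      have h1 : P i c = some (getcell (P i c) hne) := some_getcell _ _
      have h2 : P i' c = some (getcell (P i' c) hne') := some_getcell _ _
      rw [← heq] at h2
      exact hP.2 i i' c _ h1 h2
    · intro x hx
      simp only [mem_filter, mem_univ, true_and] at hx
      obtain ⟨i, hi⟩ := hx
      refine ⟨i, ?_, getcell_eq _ hi⟩
      simp [hi]
  have hcolSc : (univ.filter (fun x => ∀ i, P i c ≠ some x)).card = n - s := by
    have h1 := Finset.card_filter_add_card_filter_not
      (s := (univ : Finset (Fin n))) (p := fun x => ∃ i, P i c = some x)
    have h2 : (univ.filter (fun x => ¬ ∃ i, P i c = some x))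
        = univ.filter (fun x => ∀ i, P i c ≠ some x) := by
      apply filter_congr; intro x _; push_neg; rfl
    rw [hcolScard, h2, card_univ, Fintype.card_fin] at h1
    omega
  -- rows with empty cell in column c
  have hιcard : Fintype.card {i : Fin n // P i c = none} = n - s := by
    rw [Fintype.card_subtype]
    have h1 := Finset.card_filter_add_card_filter_not
      (s := (univ : Finset (Fin n))) (p := fun i => P i c ≠ none)
    have h2 : (univ.filter (fun i => ¬ P i c ≠ none))
        = univ.filter (fun i => P i c = none) := by
      apply filter_congr; intro i _; simp
    rw [hscard, h2, card_univ, Fintype.card_fin] at h1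
    omega
  -- row symbol bound for rows with empty c-cell
  have hrowbound : ∀ i : Fin n, P i c = none →
      (univ.filter (fun x => ∃ j, P i j = some x)).card ≤ r := by
    intro i hic
    rw [← hCcard]
    apply Finset.card_le_card_of_injOn
      (fun x => if h : ∃ j, P i j = some x then h.choose else c)
    · intro x hx
      simp only [mem_coe, mem_filter, mem_univ, true_and] at hx
      beta_reduce
      rw [dif_pos hx]
      have hch := hx.choose_spec
      by_contra hnC
      by_cases hcc : hx.choose = c
      · rw [hcc, hic] at hch; exact nomatch hch
      · rw [hempty _ hnC hcc i] at hch; exact nomatch hch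
    · intro x hx x' hx' heq
      simp only [mem_coe, mem_filter, mem_univ, true_and] at hx hx'
      beta_reduce at heq
      rw [dif_pos hx, dif_pos hx'] at heq
      have h1 := hx.choose_spec
      have h2 := hx'.choose_spec
      rw [heq] at h1
      rw [h1] at h2
      exact Option.some_inj.mp h2
  -- occurrence bound for symbols not in column c
  have hoccbound : ∀ x : Fin n, (∀ i, P i c ≠ some x) →
      (univ.filter (fun i => ∃ j, P i j = some x)).card ≤ r := by
    intro x hxc
    rw [← hCcard]
    apply Finset.card_le_card_of_injOn
      (fun i => if h : ∃ j, P i j = some x then h.choose else c)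
    · intro i hi
      simp only [mem_coe, mem_filter, mem_univ, true_and] at hi
      beta_reduce
      rw [dif_pos hi]
      have hch := hi.choose_spec
      by_contra hnC
      by_cases hcc : hi.choose = c
      · rw [hcc] at hch; exact hxc i hch
      · rw [hempty _ hnC hcc i] at hch; exact nomatch hch
    · intro i hi i' hi' heq
      simp only [mem_coe, mem_filter, mem_univ, true_and] at hi hi'
      beta_reduce at heq
      rw [dif_pos hi, dif_pos hi'] at heq
      have h1 := hi.choose_spec
      have h2 := hi'.choose_spec
      rw [heq] at h1
      exact hP.2 i i' _ x h1 h2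
  -- Hall system for completing column c
  set t : {i : Fin n // P i c = none} → Finset (Fin n) :=
    fun i => univ.filter (fun x => (∀ j, P i.1 j ≠ some x) ∧ ∀ i', P i' c ≠ some x) with ht
  have htlb : ∀ i, n - (r + s) ≤ (t i).card := by
    intro i
    show n - (r + s) ≤ (univ.filter
      (fun x => (∀ j, P i.1 j ≠ some x) ∧ ∀ i', P i' c ≠ some x)).card
    have h1 := Finset.card_filter_add_card_filter_not
      (s := (univ : Finset (Fin n)))
      (p := fun x => (∀ j, P i.1 j ≠ some x) ∧ ∀ i', P i' c ≠ some x)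
    have hsub : (univ.filter (fun x => ¬ ((∀ j, P i.1 j ≠ some x) ∧ ∀ i', P i' c ≠ some x)))
        ⊆ (univ.filter (fun x => ∃ j, P i.1 j = some x))
          ∪ (univ.filter (fun x => ∃ i', P i' c = some x)) := by
      intro x hx
      simp only [mem_filter, mem_univ, true_and, mem_union] at hx ⊢
      push_neg at hx
      by_cases h : ∃ j, P i.1 j = some x
      · exact Or.inl h
      · push_neg at h
        exact Or.inr (hx h)
    have hb : (univ.filter (fun x => ¬ ((∀ j, P i.1 j ≠ some x) ∧ ∀ i', P i' c ≠ some x))).card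
        ≤ r + s := by
      calc _ ≤ _ := Finset.card_le_card hsub
        _ ≤ (univ.filter (fun x => ∃ j, P i.1 j = some x)).card
            + (univ.filter (fun x => ∃ i', P i' c = some x)).card := Finset.card_union_le _ _
        _ ≤ r + s := Nat.add_le_add (hrowbound i.1 i.2) (le_of_eq hcolScard)
    rw [card_univ, Fintype.card_fin] at h1
    omega
  have hall : ∀ W : Finset {i : Fin n // P i c = none}, W.card ≤ (W.biUnion t).card := by
    intro W
    rcases W.eq_empty_or_nonempty with hW | ⟨i0, hi0⟩
    · simp [hW]
    by_cases hWc : W.card ≤ n - (r + s)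
    · calc W.card ≤ n - (r + s) := hWc
        _ ≤ (t i0).card := htlb i0
        _ ≤ (W.biUnion t).card :=
          Finset.card_le_card (Finset.subset_biUnion_of_mem t hi0)
    · push_neg at hWc
      have hr : r < W.card := by omega
      have hsub : (univ.filter (fun x => ∀ i', P i' c ≠ some x)) ⊆ W.biUnion t := by
        intro x hx
        simp only [mem_filter, mem_univ, true_and] at hx
        have hex : ∃ i ∈ W, ∀ j, P i.1 j ≠ some x := by
          by_contra h
          push_neg at h
          have himg : W.image (Subtype.val) ⊆ univ.filter (fun i => ∃ j, P i j = some x) := by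
            intro i hi
            simp only [mem_image] at hi
            obtain ⟨i', hi', rfl⟩ := hi
            simp only [mem_filter, mem_univ, true_and]
            exact h i' hi'
          have := Finset.card_le_card himg
          rw [Finset.card_image_of_injective _ Subtype.val_injective] at this
          exact absurd (le_trans this (hoccbound x hx)) (not_le.mpr hr)
        obtain ⟨i, hiW, hrow⟩ := hex
        exact Finset.mem_biUnion.mpr ⟨i, hiW, by
          simp only [ht, mem_filter, mem_univ, true_and]; exact ⟨hrow, hx⟩⟩
      calc W.card ≤ Fintype.card {i : Fin n // P i c = none} := by
            rw [← Finset.card_univ]; exact Finset.card_le_univ W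
        _ = n - s := hιcard
        _ = (univ.filter (fun x => ∀ i', P i' c ≠ some x)).card := hcolSc.symm
        _ ≤ (W.biUnion t).card := Finset.card_le_card hsub
  obtain ⟨g, hginj, hg⟩ := (Finset.all_card_le_biUnion_card_iff_exists_injective t).mp hall
  have hg1 : ∀ i : {i : Fin n // P i c = none}, ∀ j, P i.1 j ≠ some (g i) := by
    intro i
    have := hg i
    simp only [ht, mem_filter, mem_univ, true_and] at this
    exact this.1
  have hg2 : ∀ i : {i : Fin n // P i c = none}, ∀ i', P i' c ≠ some (g i) := by
    intro i
    have := hg i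
    simp only [ht, mem_filter, mem_univ, true_and] at this
    exact this.2
  -- the extended square Q with column c complete
  set Q : Fin n → Fin n → Option (Fin n) :=
    fun i j => if j = c then (if h : P i c = none then some (g ⟨i, h⟩) else P i c) else P i j
    with hQ
  have hQls : IsPartialLatinSquare Q := by
    constructor
    · intro i j j' x h1 h2
      simp only [hQ] at h1 h2
      by_cases hj : j = c <;> by_cases hj' : j' = c
      · rw [hj, hj']
      · rw [if_pos hj] at h1
        rw [if_neg hj'] at h2
        by_cases hic : P i c = none
        · rw [dif_pos hic] at h1
          have : g ⟨i, hic⟩ = x := by injection h1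
          exact absurd h2 (this ▸ hg1 ⟨i, hic⟩ j')
        · rw [dif_neg hic] at h1
          exact absurd (hP.1 i c j' x h1 h2).symm hj'
      · rw [if_neg hj] at h1
        rw [if_pos hj'] at h2
        by_cases hic : P i c = none
        · rw [dif_pos hic] at h2
          have : g ⟨i, hic⟩ = x := by injection h2
          exact absurd h1 (this ▸ hg1 ⟨i, hic⟩ j)
        · rw [dif_neg hic] at h2
          exact absurd (hP.1 i c j x h2 h1).symm hj
      · rw [if_neg hj] at h1
        rw [if_neg hj'] at h2
        exact hP.1 i j j' x h1 h2
    · intro i i' j x h1 h2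
      simp only [hQ] at h1 h2
      by_cases hj : j = c
      · rw [if_pos hj] at h1 h2
        by_cases hic : P i c = none <;> by_cases hic' : P i' c = none
        · rw [dif_pos hic] at h1
          rw [dif_pos hic'] at h2
          have e1 : g ⟨i, hic⟩ = x := by injection h1
          have e2 : g ⟨i', hic'⟩ = x := by injection h2
          have := hginj (e1.trans e2.symm)
          exact congrArg Subtype.val this
        · rw [dif_pos hic] at h1
          rw [dif_neg hic'] at h2
          have e1 : g ⟨i, hic⟩ = x := by injection h1
          exact absurd h2 (e1 ▸ hg2 ⟨i, hic⟩ i')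
        · rw [dif_neg hic] at h1
          rw [dif_pos hic'] at h2
          have e2 : g ⟨i', hic'⟩ = x := by injection h2
          exact absurd h1 (e2 ▸ hg2 ⟨i', hic'⟩ i)
        · rw [dif_neg hic] at h1
          rw [dif_neg hic'] at h2
          exact hP.2 i i' c x h1 h2
      · rw [if_neg hj] at h1 h2
        exact hP.2 i i' j x h1 h2
  have hQfull : ∀ j ∈ insert c C, ∀ i, Q i j ≠ none := by
    intro j hj i
    simp only [hQ]
    by_cases h : j = c
    · rw [if_pos h]
      by_cases hic : P i c = none
      · rw [dif_pos hic]; exact Option.some_ne_none _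
      · rw [dif_neg hic]; exact hic
    · rw [if_neg h]
      have hjC : j ∈ C := by
        rcases Finset.mem_insert.mp hj with h' | h'
        · exact absurd h' h
        · exact h'
      exact hfullC j hjC i
  have hQemp : ∀ j, j ∉ insert c C → ∀ i, Q i j = none := by
    intro j hj i
    have hjc : j ≠ c := fun h => hj (by rw [h]; exact Finset.mem_insert_self c C)
    have hjC : j ∉ C := fun h => hj (Finset.mem_insert_of_mem h)
    simp only [hQ]
    rw [if_neg hjc]
    exact hempty j hjC hjc i
  have hcardle : (insert c C).card ≤ n := by
    calc (insert c C).card ≤ (univ : Finset (Fin n)).card := Finset.card_le_univ _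
      _ = n := by simp
  obtain ⟨L, hL, hLQ⟩ := complete_of_full (n - (insert c C).card) (insert c C) Q
    (by omega) hQls hQfull hQemp
  refine ⟨L, hL, ?_⟩
  intro i j x hx
  apply hLQ
  simp only [hQ]
  by_cases h : j = c
  · rw [if_pos h]
    rw [h] at hx
    rw [dif_neg (by rw [hx]; exact Option.some_ne_none _)]
    exact hx
  · rw [if_neg h]
    exact hx
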